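/- (Bi-free algebraic central limit theorem, second-moment convergence of cumulant form.) Let z^{(n)}, n ∈ ℕ, be a bi-free sequence of two-faced families in (A, φ) indexed by K = I ⊔ J, with φ(z_k^{(n)}) = 0 for all k, n, with uniformly bounded moments sup_n |φ(z_{k₁}^{(n)} ⋯ z_{k_m}^{(n)})| < ∞ for every word k₁,…,k_m, and with N^{-1} Σ_{n≤N} φ(z_k^{(n)} z_l^{(n)}) → C_{kl}. Let S_{N,k} = N^{-1/2} Σ_{n≤N} z_k^{(n)}. Then for every word k₁…k_m, the bi-free cumulant satisfies lim_{N→∞} R_{k₁…k_m}(μ_{S_N}) = C_{k₁k₂} if m = 2, and = 0 if m ≠ 2; consequently the moments of S_N converge to those of the bi-free central limit distribution γ_C. -/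

import Mathlib

open Filter MvPolynomial


lemma biFreeCLT_bound {σ : Type*} (f : ℕ → σ → ℂ) (D : σ → ℝ)
    (h : ∀ i n, ‖f n i‖ ≤ D i) (P : MvPolynomial σ ℂ) :
    ∃ B : ℝ, 0 ≤ B ∧ ∀ n, ‖MvPolynomial.eval (f n) P‖ ≤ B := by
  induction P using MvPolynomial.induction_on with
  | C a => exact ⟨‖a‖, norm_nonneg _, fun n => by simp⟩
  | add p q hp hq =>
    obtain ⟨B1, hB1, h1⟩ := hp
    obtain ⟨B2, hB2, h2⟩ := hq
    refine ⟨B1 + B2, by positivity, fun n => ?_⟩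
    rw [map_add]
    exact (norm_add_le _ _).trans (add_le_add (h1 n) (h2 n))
  | mul_X p i hp =>
    obtain ⟨B, hB, h1⟩ := hp
    have hDi : 0 ≤ D i := le_trans (norm_nonneg _) (h i 0)
    refine ⟨B * D i, by positivity, fun n => ?_⟩
    rw [map_mul, norm_mul, eval_X]
    exact mul_le_mul (h1 n) (h i n) (norm_nonneg _) hB

lemma biFreeCLT_evalTendsto {σ : Type*} (f : ℕ → σ → ℂ) (g : σ → ℂ)
    (h : ∀ i, Tendsto (fun N => f N i) atTop (nhds (g i)))
    (P : MvPolynomial σ ℂ) :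
    Tendsto (fun N => MvPolynomial.eval (f N) P) atTop
      (nhds (MvPolynomial.eval g P)) := by
  induction P using MvPolynomial.induction_on with
  | C a => simpa using tendsto_const_nhds
  | add p q hp hq => simpa [map_add] using hp.add hq
  | mul_X p i hp => simpa [map_mul] using hp.mul (h i)

lemma biFreeCLT_invSqrt :
    Tendsto (fun N : ℕ => (Real.sqrt N)⁻¹) atTop (nhds 0) := by
  apply Filter.Tendsto.inv_tendsto_atTop
  have h := (tendsto_rpow_atTop (y := (1:ℝ)/2) (by norm_num)).comp
    (tendsto_natCast_atTop_atTop (R := ℝ))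
  exact h.congr fun N => (Real.sqrt_eq_rpow _).symm


/-- The distribution (collection of joint moments) of a family `z` of
non-commutative random variables in `(A, φ)`, as a function on words. -/
noncomputable def momentFn {A : Type*} [Ring A] [Algebra ℂ A] (φ : A →ₗ[ℂ] ℂ)
    {K : Type*} (z : K → A) : List K → ℂ :=
  fun w => φ (w.map z).prod

set_option maxHeartbeats 1000000

/-- **Theorem 7.9 (Bi-free algebraic central limit theorem)** (Voiculescu, Free
Probability for Pairs of Faces I).  Let `z⁽ⁿ⁾` be a bi-free sequence of two-faced
families in `(A, φ)` indexed by `K = I ⊔ J`, centered, with uniformly bounded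
moments, and with Cesàro-convergent covariances
`N⁻¹ ∑_{n<N} φ(z_k⁽ⁿ⁾ z_l⁽ⁿ⁾) → C_{kl}`.  With `S_{N,k} = N^{-1/2} ∑_{n<N} z_k⁽ⁿ⁾`,
the bi-free cumulants of `μ_{S_N}` satisfy
`R_{kl}(μ_{S_N}) → C_{kl}` and `R_{k₁…k_m}(μ_{S_N}) → 0` for `m ≠ 2`, and
consequently the moments of `S_N` converge to those of the bi-free central limit
distribution `γ_C`.

The bi-free cumulants `R` are given abstractly with their characterizing
properties (Theorem 5.7, Lemma 7.2, Proposition 5.9): `R_k = φ(z_k)`,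
`R_{kl} = φ(z_k z_l) − φ(z_k) φ(z_l)`, homogeneity under scaling, universal
polynomial dependence on the moments, and additivity along the bi-free sequence;
`γ_C` is the distribution whose cumulants of order `≠ 2` vanish and whose
second-order cumulants are `C`, and moments are universal polynomials in the
cumulants (Proposition 5.9). -/
theorem biFree_central_limit_theorem
    {I J : Type*} {A : Type*} [Ring A] [Algebra ℂ A]
    (φ : A →ₗ[ℂ] ℂ) (hφ1 : φ 1 = 1)
    (R : List (I ⊕ J) → (List (I ⊕ J) → ℂ) → ℂ)
    (hR1 : ∀ (z : I ⊕ J → A) (k), R [k] (momentFn φ z) = φ (z k))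
    (hR2 : ∀ (z : I ⊕ J → A) (k l),
      R [k, l] (momentFn φ z) = φ (z k * z l) - φ (z k) * φ (z l))
    (hscale : ∀ (c : ℂ) (z : I ⊕ J → A) (w : List (I ⊕ J)),
      R w (momentFn φ fun k => c • z k) = c ^ w.length * R w (momentFn φ z))
    (hpoly : ∀ w : List (I ⊕ J),
      ∃ P : MvPolynomial {s : List (I ⊕ J) // s.Sublist w ∧ s ≠ []} ℂ,
        ∀ ν : List (I ⊕ J) → ℂ, R w ν = MvPolynomial.eval (fun s => ν s.1) P)
    (z : ℕ → I ⊕ J → A)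
    (hcent : ∀ n k, φ (z n k) = 0)
    (hbdd : ∀ w : List (I ⊕ J), ∃ D : ℝ, ∀ n, ‖momentFn φ (z n) w‖ ≤ D)
    (C : I ⊕ J → I ⊕ J → ℂ)
    (hcov : ∀ k l, Filter.Tendsto
      (fun N : ℕ => (N : ℂ)⁻¹ * ∑ n ∈ Finset.range N, φ (z n k * z n l))
      Filter.atTop (nhds (C k l)))
    -- bi-freeness of the sequence `z⁽⁰⁾, z⁽¹⁾, …`, used through the additivity of
    -- the bi-free cumulants on bi-free families:
    (hadd : ∀ (w : List (I ⊕ J)) (N : ℕ),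
      R w (momentFn φ fun k => ∑ n ∈ Finset.range N, z n k) =
        ∑ n ∈ Finset.range N, R w (momentFn φ (z n)))
    (S : ℕ → I ⊕ J → A)
    (hS : ∀ N k, S N k = (((Real.sqrt N : ℝ) : ℂ))⁻¹ • ∑ n ∈ Finset.range N, z n k)
    (γ : List (I ⊕ J) → ℂ) (hγ1 : γ [] = 1)
    (hγ2 : ∀ k l, R [k, l] γ = C k l)
    (hγ0 : ∀ w : List (I ⊕ J), w ≠ [] → w.length ≠ 2 → R w γ = 0)
    (hmom : ∀ w : List (I ⊕ J),
      ∃ Q : MvPolynomial {s : List (I ⊕ J) // s.Sublist w ∧ s ≠ []} ℂ,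
        ∀ ν : List (I ⊕ J) → ℂ, ν [] = 1 →
          ν w = MvPolynomial.eval (fun s => R s.1 ν) Q) :
    (∀ k l, Filter.Tendsto (fun N => R [k, l] (momentFn φ (S N)))
      Filter.atTop (nhds (C k l))) ∧
    (∀ w : List (I ⊕ J), w ≠ [] → w.length ≠ 2 →
      Filter.Tendsto (fun N => R w (momentFn φ (S N))) Filter.atTop (nhds 0)) ∧
    (∀ w : List (I ⊕ J),
      Filter.Tendsto (fun N => momentFn φ (S N) w) Filter.atTop (nhds (γ w))) := by
  classical
  -- Key identity: cumulant of S_N as a scaled sum of cumulants.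
  have key : ∀ (w : List (I ⊕ J)) (N : ℕ),
      R w (momentFn φ (S N)) =
        (((Real.sqrt N : ℝ) : ℂ))⁻¹ ^ w.length *
          ∑ n ∈ Finset.range N, R w (momentFn φ (z n)) := by
    intro w N
    have h1 : S N = fun k => (((Real.sqrt N : ℝ) : ℂ))⁻¹ •
        ∑ n ∈ Finset.range N, z n k := funext fun k => hS N k
    rw [h1, hscale, hadd]
  -- second cumulants
  have key2 : ∀ (k l : I ⊕ J) (N : ℕ),
      R [k, l] (momentFn φ (S N)) =
        (N : ℂ)⁻¹ * ∑ n ∈ Finset.range N, φ (z n k * z n l) := by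
    intro k l N
    rw [key [k, l] N]
    have h2 : ∀ n ∈ Finset.range N,
        R [k, l] (momentFn φ (z n)) = φ (z n k * z n l) := by
      intro n _
      rw [hR2]
      simp [hcent]
    rw [Finset.sum_congr rfl h2]
    congr 1
    have hsq : (((Real.sqrt N : ℝ) : ℂ)) ^ 2 = (N : ℂ) := by
      rw [← Complex.ofReal_pow, Real.sq_sqrt (by positivity)]
      simp
    rw [show ([k, l] : List (I ⊕ J)).length = 2 from rfl, inv_pow, hsq]
  have part1 : ∀ k l, Filter.Tendsto (fun N => R [k, l] (momentFn φ (S N)))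
      Filter.atTop (nhds (C k l)) := by
    intro k l
    have : (fun N => R [k, l] (momentFn φ (S N))) =
        fun N : ℕ => (N : ℂ)⁻¹ * ∑ n ∈ Finset.range N, φ (z n k * z n l) :=
      funext fun N => key2 k l N
    rw [this]
    exact hcov k l
  have part2 : ∀ w : List (I ⊕ J), w ≠ [] → w.length ≠ 2 →
      Filter.Tendsto (fun N => R w (momentFn φ (S N))) Filter.atTop (nhds 0) := by
    intro w hw hw2
    have hcase : w.length = 1 ∨ 3 ≤ w.length := by
      have : w.length ≠ 0 := fun h => hw (List.length_eq_zero_iff.mp h)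
      omega
    rcases hcase with h1 | h3
    · -- length one: all cumulants vanish by centering
      obtain ⟨k, rfl⟩ : ∃ k, w = [k] := by
        match w, h1 with
        | [k], _ => exact ⟨k, rfl⟩
      have hz : ∀ N, R [k] (momentFn φ (S N)) = 0 := by
        intro N
        rw [key [k] N]
        have : ∀ n ∈ Finset.range N, R [k] (momentFn φ (z n)) = 0 := by
          intro n _
          rw [hR1, hcent]
        rw [Finset.sum_congr rfl this]
        simp
      have : (fun N => R [k] (momentFn φ (S N))) = fun _ => (0 : ℂ) :=
        funext hz
      rw [this]
      exact tendsto_const_nhds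
    · -- length ≥ 3 : bound by B / √N
      obtain ⟨P, hP⟩ := hpoly w
      have hD : ∀ s : {s : List (I ⊕ J) // s.Sublist w ∧ s ≠ []},
          ∃ D : ℝ, ∀ n, ‖momentFn φ (z n) s.1‖ ≤ D :=
        fun s => hbdd s.1
      choose D hDs using hD
      obtain ⟨B, hB0, hB⟩ := biFreeCLT_bound
        (fun n (s : {s : List (I ⊕ J) // s.Sublist w ∧ s ≠ []}) =>
          momentFn φ (z n) s.1) D (fun i n => hDs i n) P
      have hterm : ∀ n, ‖R w (momentFn φ (z n))‖ ≤ B := by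
        intro n
        rw [hP]
        exact hB n
      rw [tendsto_zero_iff_norm_tendsto_zero]
      apply squeeze_zero' (Filter.Eventually.of_forall fun N => norm_nonneg _)
        ?_ (by simpa using biFreeCLT_invSqrt.const_mul B)
      · filter_upwards [Filter.eventually_ge_atTop 1] with N hN
        set r : ℝ := Real.sqrt N with hr
        have hr1 : 1 ≤ r := Real.one_le_sqrt.mpr (by exact_mod_cast hN)
        have hr0 : 0 < r := lt_of_lt_of_le one_pos hr1
        have habs : ‖(((r : ℝ) : ℂ))⁻¹‖ = r⁻¹ := by
          rw [norm_inv, Complex.norm_of_nonneg hr0.le]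
        have hsum : ‖∑ n ∈ Finset.range N, R w (momentFn φ (z n))‖
            ≤ N * B := by
          refine (norm_sum_le _ _).trans ?_
          calc ∑ n ∈ Finset.range N, ‖R w (momentFn φ (z n))‖
              ≤ ∑ _n ∈ Finset.range N, B := Finset.sum_le_sum fun n _ => hterm n
            _ = N * B := by simp [mul_comm]
        have hnorm : ‖R w (momentFn φ (S N))‖ ≤ r⁻¹ ^ w.length * (N * B) := by
          rw [key w N]
          rw [norm_mul, norm_pow, habs]
          exact mul_le_mul_of_nonneg_left hsum (by positivity)
        refine hnorm.trans ?_
        have hNr : (N : ℝ) = r ^ 2 := (Real.sq_sqrt (by positivity)).symm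
        have hr2 : r⁻¹ ^ w.length = r⁻¹ ^ (w.length - 2) * r⁻¹ ^ 2 := by
          rw [← pow_add]
          congr 1
          omega
        have hr3 : r⁻¹ ^ 2 * (N : ℝ) = 1 := by
          rw [hNr]
          field_simp
        have hstep : r⁻¹ ^ w.length * (N * B) = r⁻¹ ^ (w.length - 2) * B := by
          calc r⁻¹ ^ w.length * (N * B)
              = r⁻¹ ^ (w.length - 2) * (r⁻¹ ^ 2 * (N : ℝ)) * B := by rw [hr2]; ring
            _ = r⁻¹ ^ (w.length - 2) * B := by rw [hr3]; ring
        rw [hstep]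
        have hle : r⁻¹ ^ (w.length - 2) ≤ r⁻¹ := by
          have : r⁻¹ ^ (w.length - 2) ≤ r⁻¹ ^ 1 :=
            pow_le_pow_of_le_one (by positivity) (inv_le_one_of_one_le₀ hr1)
              (by omega)
          simpa using this
        calc r⁻¹ ^ (w.length - 2) * B ≤ r⁻¹ * B :=
              mul_le_mul_of_nonneg_right hle hB0
          _ = B * r⁻¹ := mul_comm _ _
  refine ⟨part1, part2, ?_⟩
  -- convergence of cumulants to those of γ
  have main : ∀ s : List (I ⊕ J), s ≠ [] →
      Filter.Tendsto (fun N => R s (momentFn φ (S N))) Filter.atTop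
        (nhds (R s γ)) := by
    intro s hs
    by_cases h2 : s.length = 2
    · obtain ⟨k, l, rfl⟩ : ∃ k l, s = [k, l] := by
        match s, h2 with
        | [k, l], _ => exact ⟨k, l, rfl⟩
      rw [hγ2 k l]
      exact part1 k l
    · rw [hγ0 s hs h2]
      exact part2 s hs h2
  intro w
  rcases eq_or_ne w [] with rfl | hw
  · have : (fun N => momentFn φ (S N) ([] : List (I ⊕ J))) = fun _ => (1 : ℂ) := by
      funext N
      simp [momentFn, hφ1]
    rw [this, hγ1]
    exact tendsto_const_nhds
  · obtain ⟨Q, hQ⟩ := hmom w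
    have hSempty : ∀ N, momentFn φ (S N) [] = 1 := fun N => by
      simp [momentFn, hφ1]
    have hfn : (fun N => momentFn φ (S N) w) =
        fun N => MvPolynomial.eval
          (fun s : {s : List (I ⊕ J) // s.Sublist w ∧ s ≠ []} =>
            R s.1 (momentFn φ (S N))) Q :=
      funext fun N => hQ (momentFn φ (S N)) (hSempty N)
    rw [hfn, show γ w = MvPolynomial.eval
        (fun s : {s : List (I ⊕ J) // s.Sublist w ∧ s ≠ []} => R s.1 γ) Q
      from hQ γ hγ1]
    exact biFreeCLT_evalTendsto
      (fun N (s : {s : List (I ⊕ J) // s.Sublist w ∧ s ≠ []}) =>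
        R s.1 (momentFn φ (S N)))
      (fun s => R s.1 γ) (fun s => main s.1 s.2.2) Q
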